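/- Let G be a group containing an infinite cyclic subgroup of finite index (i.e. G is virtually ℤ). If A and B are subgroups of G with A ∩ B = {1}, then A is finite or B is finite. -/

import Mathlib

/-- In a virtually-`ℤ` group, two subgroups intersecting trivially cannot both be infinite. -/
theorem stmt10 {G : Type*} [Group G]
    (H : Subgroup G) (hfi : H.FiniteIndex) (hcyc : IsCyclic H) (hinfH : Infinite H)
    (A B : Subgroup G) (hAB : A ⊓ B = ⊥) :
    Finite A ∨ Finite B := by
  by_contra hc
  push_neg at hc
  obtain ⟨hA, hB⟩ := hc
  -- In an infinite subgroup K, the intersection with H contains a nontrivial element.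
  have key : ∀ K : Subgroup G, Infinite K → ∃ x : G, x ∈ K ∧ x ∈ H ∧ x ≠ 1 := by
    intro K hK
    have hfin : (H.subgroupOf K).FiniteIndex := inferInstance
    have hinf : Infinite (H.subgroupOf K) := by
      by_contra hfin2
      rw [not_infinite_iff_finite] at hfin2
      have h1 : Nat.card (H.subgroupOf K) ≠ 0 := Nat.card_pos.ne'
      have h3 : Nat.card K ≠ 0 := by
        rw [← (H.subgroupOf K).card_mul_index]
        exact mul_ne_zero h1 hfin.index_ne_zero
      exact h3 (Nat.card_eq_zero_of_infinite)
    obtain ⟨x, hx⟩ := exists_ne (1 : H.subgroupOf K)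
    refine ⟨((x : K) : G), (x : K).2, Subgroup.mem_subgroupOf.mp x.2, ?_⟩
    intro h1
    apply hx
    ext
    exact h1
  obtain ⟨a, haA, haH, ha1⟩ := key A hA
  obtain ⟨b, hbB, hbH, hb1⟩ := key B hB
  obtain ⟨g, hg⟩ := hcyc.exists_generator
  obtain ⟨m, hm⟩ := Subgroup.mem_zpowers_iff.mp (hg ⟨a, haH⟩)
  obtain ⟨n, hn⟩ := Subgroup.mem_zpowers_iff.mp (hg ⟨b, hbH⟩)
  have hm0 : m ≠ 0 := by
    rintro rfl
    exact ha1 (by simpa using congrArg Subtype.val hm.symm)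
  have hn0 : n ≠ 0 := by
    rintro rfl
    exact hb1 (by simpa using congrArg Subtype.val hn.symm)
  have ha : a = (g : G) ^ m := by
    have := congrArg Subtype.val hm
    simpa using this.symm
  have hb : b = (g : G) ^ n := by
    have := congrArg Subtype.val hn
    simpa using this.symm
  have hab : a ^ n = b ^ m := by
    rw [ha, hb, ← zpow_mul, ← zpow_mul, mul_comm]
  have hmem : a ^ n ∈ A ⊓ B := ⟨A.zpow_mem haA n, hab ▸ B.zpow_mem hbB m⟩
  rw [hAB, Subgroup.mem_bot] at hmem
  -- so (g : G) ^ (m * n) = 1 with m * n ≠ 0, contradicting H infinite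
  have hg1 : g ^ (m * n) = (1 : H) := by
    ext
    push_cast
    rw [zpow_mul]
    rw [ha] at hmem
    exact hmem
  have hfo : IsOfFinOrder g :=
    isOfFinOrder_iff_zpow_eq_one.mpr ⟨m * n, mul_ne_zero hm0 hn0, hg1⟩
  have htop : (Subgroup.zpowers g : Set H) = Set.univ := by
    ext x
    simpa using hg x
  have hfin := hfo.finite_zpowers
  rw [htop] at hfin
  exact Set.infinite_univ hfin
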